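/- Fix real numbers λ > 0 and a > 0, b > 0. For k ∈ (−1,1), let θ₀(k) be the unique θ ∈ (0, π) with (k−1)·√(ab/λ)·cos(θ) = (k·b/λ + a)·sin(θ). Then the function k ↦ θ₀(k) is strictly increasing on (−1,1), θ₀(k) < π for all k ∈ (−1,1), and sup{θ₀(k) : k ∈ (−1,1)} = π. Consequently, the supremum over k ∈ (−1,1) of the smallest positive L with F_{a,b,λ,k,L}(0) = 0 equals √(λ/(ab))·π. -/

import Mathlib

/-- The branch `η(σ)` of the square root of `((λ+1)²σ² − 4λab)/(4λ²)` given by the principal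
complex power; its square is always `((λ+1)²σ² − 4λab)/(4λ²)`. -/
noncomputable def charEta (lam a b : ℝ) (σ : ℂ) : ℂ :=
  ((((lam : ℂ) + 1) ^ 2 * σ ^ 2 - 4 * (lam : ℂ) * a * b) / (4 * (lam : ℂ) ^ 2)) ^ ((1 : ℂ) / 2)

open Classical in
/-- The characteristic function `F_{a,b,λ,k,L}(σ) = (k−1)cosh(ηL) −
((k+1)((λ+1)/(2λ))σ + (kb/λ + a))·sinh(ηL)/η`, with `sinh(ηL)/η` interpreted as `L` when
`η = 0`.  The value does not depend on the choice of the square root `η`. -/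
noncomputable def Fchar (lam a b k L : ℝ) (σ : ℂ) : ℂ :=
  ((k : ℂ) - 1) * Complex.cosh (charEta lam a b σ * L) -
    (((k : ℂ) + 1) * (((lam : ℂ) + 1) / (2 * (lam : ℂ))) * σ + ((k : ℂ) * b / lam + a)) *
      (if charEta lam a b σ = 0 then (L : ℂ)
       else Complex.sinh (charEta lam a b σ * L) / charEta lam a b σ)

open Real Filter in
/-- Computation of `Fchar` at `σ = 0`. -/
lemma Fchar_zero (lam a b : ℝ) (hlam : 0 < lam) (ha : 0 < a) (hb : 0 < b) (k L : ℝ) :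
    Fchar lam a b k L 0 =
      (((k - 1) * Real.cos (Real.sqrt (a * b / lam) * L) -
        (k * b / lam + a) * (Real.sin (Real.sqrt (a * b / lam) * L) / Real.sqrt (a * b / lam)) : ℝ) : ℂ) := by
  set ω : ℝ := Real.sqrt (a * b / lam) with hωdef
  have hω : 0 < ω := Real.sqrt_pos.mpr (by positivity)
  have hω2 : ω ^ 2 = a * b / lam := Real.sq_sqrt (by positivity)
  set e : ℂ := charEta lam a b 0 with hedef
  have hlam' : (lam : ℂ) ≠ 0 := by exact_mod_cast hlam.ne'
  have hw_ne : -(((a * b / lam : ℝ)) : ℂ) ≠ 0 := by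
    simp only [ne_eq, neg_eq_zero, Complex.ofReal_eq_zero]
    positivity
  have hz : ((((lam : ℂ) + 1) ^ 2 * (0:ℂ) ^ 2 - 4 * (lam : ℂ) * a * b) / (4 * (lam : ℂ) ^ 2))
      = -(((a * b / lam : ℝ)) : ℂ) := by
    push_cast
    field_simp
    ring
  have he : e = (-(((a * b / lam : ℝ)) : ℂ)) ^ ((1:ℂ)/2) := by
    rw [hedef, charEta, hz]
  have he2 : e ^ 2 = -(((a * b / lam : ℝ)) : ℂ) := by
    rw [he, sq, ← Complex.cpow_add _ _ hw_ne]
    norm_num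
  have hIω2 : (Complex.I * (ω : ℂ)) ^ 2 = -(((a * b / lam : ℝ)) : ℂ) := by
    have : ((ω : ℂ)) ^ 2 = ((a * b / lam : ℝ) : ℂ) := by
      rw [← Complex.ofReal_pow, hω2]
    rw [mul_pow, Complex.I_sq, this]; ring
  have hcases : e = Complex.I * (ω : ℂ) ∨ e = -(Complex.I * (ω : ℂ)) := by
    have h0 : (e - Complex.I * ω) * (e + Complex.I * ω) = 0 := by
      linear_combination he2 - hIω2
    rcases mul_eq_zero.mp h0 with h | h
    · left; linear_combination h
    · right; linear_combination h
  have hIωne : Complex.I * (ω : ℂ) ≠ 0 := by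
    simp [Complex.I_ne_zero, Complex.ofReal_ne_zero, hω.ne']
  have hωC : (ω : ℂ) ≠ 0 := by exact_mod_cast hω.ne'
  rcases hcases with hc | hc
  · have hene : e ≠ 0 := hc ▸ hIωne
    rw [Fchar, ← hedef, if_neg hene, hc]
    have hmul : Complex.I * (ω : ℂ) * (L : ℂ) = ((ω * L : ℝ) : ℂ) * Complex.I := by
      push_cast; ring
    rw [hmul, Complex.cosh_mul_I, Complex.sinh_mul_I, ← Complex.ofReal_cos, ← Complex.ofReal_sin]
    push_cast
    field_simp
    ring
  · have hene : e ≠ 0 := by rw [hc]; simpa using hIωne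
    rw [Fchar, ← hedef, if_neg hene, hc]
    have hmul : -(Complex.I * (ω : ℂ)) * (L : ℂ) = ((-(ω * L) : ℝ) : ℂ) * Complex.I := by
      push_cast; ring
    rw [hmul, Complex.cosh_mul_I, Complex.sinh_mul_I, ← Complex.ofReal_cos, ← Complex.ofReal_sin]
    rw [Real.cos_neg, Real.sin_neg]
    push_cast
    field_simp
    ring

open Real Filter Topology in
/-- For `λ > 0`, `a > 0`, `b > 0`, the marginal angle `θ₀(k)` (the unique
`θ ∈ (0,π)` with `(k−1)√(ab/λ)cos θ = (kb/λ+a)sin θ`) is strictly increasing in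
`k ∈ (−1,1)`, bounded by `π`, with supremum `π`; consequently the supremum over `k ∈ (−1,1)`
of the smallest positive `L` with `F_{a,b,λ,k,L}(0) = 0` equals `√(λ/(ab))·π`. -/
theorem stmt_13 (lam a b : ℝ) (hlam : 0 < lam) (ha : 0 < a) (hb : 0 < b)
    (θ₀ : ℝ → ℝ)
    (hθ : ∀ k ∈ Set.Ioo (-1 : ℝ) 1, θ₀ k ∈ Set.Ioo 0 Real.pi ∧
      (k - 1) * Real.sqrt (a * b / lam) * Real.cos (θ₀ k) =
        (k * b / lam + a) * Real.sin (θ₀ k)) :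
    StrictMonoOn θ₀ (Set.Ioo (-1 : ℝ) 1) ∧
    (∀ k ∈ Set.Ioo (-1 : ℝ) 1, θ₀ k < Real.pi) ∧
    sSup (θ₀ '' Set.Ioo (-1 : ℝ) 1) = Real.pi ∧
    sSup ((fun k => sInf {L : ℝ | 0 < L ∧ Fchar lam a b k L 0 = 0}) '' Set.Ioo (-1 : ℝ) 1) =
      Real.sqrt (lam / (a * b)) * Real.pi := by
  set ω : ℝ := Real.sqrt (a * b / lam) with hωdef
  have hω : 0 < ω := Real.sqrt_pos.mpr (by positivity)
  set g : ℝ → ℝ := fun k => (k * b / lam + a) / ((k - 1) * ω) with hgdef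
  -- representation of θ₀ via arctan
  have hrep : ∀ k ∈ Set.Ioo (-1 : ℝ) 1, θ₀ k = π / 2 - Real.arctan (g k) := by
    intro k hk
    obtain ⟨⟨h0, hπ⟩, heq⟩ := hθ k hk
    have hs : 0 < Real.sin (θ₀ k) := Real.sin_pos_of_pos_of_lt_pi h0 hπ
    have hcne : (k - 1) * ω ≠ 0 := by
      have : k - 1 < 0 := by linarith [hk.2]
      exact (mul_neg_of_neg_of_pos this hω).ne
    have htan : Real.tan (π / 2 - θ₀ k) = g k := by
      rw [Real.tan_eq_sin_div_cos, Real.sin_pi_div_two_sub, Real.cos_pi_div_two_sub]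
      simp only [hgdef]
      rw [div_eq_div_iff hs.ne' hcne]
      linear_combination heq
    have := Real.arctan_tan (x := π / 2 - θ₀ k) (by linarith) (by linarith)
    rw [htan] at this
    linarith
  -- strict antitonicity of g
  have hg : ∀ j k : ℝ, -1 < j → j < k → k < 1 → g k < g j := by
    intro j k hj hjk hk
    have hj1 : 0 < (1 - j) * ω := mul_pos (by linarith) hω
    have hk1 : 0 < (1 - k) * ω := mul_pos (by linarith) hω
    have hgj : g j = -((j * b / lam + a) / ((1 - j) * ω)) := by
      simp only [hgdef]; rw [show (j - 1) * ω = -((1 - j) * ω) by ring, div_neg]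
    have hgk : g k = -((k * b / lam + a) / ((1 - k) * ω)) := by
      simp only [hgdef]; rw [show (k - 1) * ω = -((1 - k) * ω) by ring, div_neg]
    rw [hgj, hgk, neg_lt_neg_iff, div_lt_div_iff₀ hj1 hk1]
    have hexp : ∀ x : ℝ, x * b / lam + a = (x * b + a * lam) / lam := by
      intro x; field_simp
    rw [hexp j, hexp k, div_mul_eq_mul_div, div_mul_eq_mul_div, div_lt_div_iff₀ hlam hlam]
    nlinarith [mul_pos (mul_pos (mul_pos (sub_pos.mpr hjk)
      (by positivity : (0:ℝ) < b + a * lam)) hω) hlam]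
  -- strict monotonicity of θ₀
  have hmono : StrictMonoOn θ₀ (Set.Ioo (-1 : ℝ) 1) := by
    intro j hj k hk hjk
    rw [hrep j hj, hrep k hk]
    have := Real.arctan_strictMono (hg j k hj.1 hjk hk.2)
    linarith
  have hlt : ∀ k ∈ Set.Ioo (-1 : ℝ) 1, θ₀ k < π := fun k hk => (hθ k hk).1.2
  -- tendsto: θ₀ k → π as k → 1⁻ within Ioo
  have hne : (𝓝[Set.Ioo (-1 : ℝ) 1] 1).NeBot := by
    rw [← mem_closure_iff_nhdsWithin_neBot, closure_Ioo (by norm_num : (-1:ℝ) ≠ 1)]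
    exact Set.right_mem_Icc.mpr (by norm_num)
  have key : ∀ w < π, ∃ k ∈ Set.Ioo (-1 : ℝ) 1, w < θ₀ k := by
    intro w hw
    have t1 : Tendsto (fun k : ℝ => (1 - k) * ω) (𝓝[Set.Ioo (-1 : ℝ) 1] 1) (𝓝[>] 0) := by
      apply tendsto_nhdsWithin_of_tendsto_nhds_of_eventually_within
      · have h1 : Tendsto (fun k : ℝ => (1 - k) * ω) (𝓝 1) (𝓝 0) := by
          have h2 : Tendsto (fun k : ℝ => (1 - k) * ω) (𝓝 1) (𝓝 ((1 - 1) * ω)) :=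
            ((continuous_const.sub continuous_id).mul continuous_const).tendsto 1
          simpa using h2
        exact h1.mono_left nhdsWithin_le_nhds
      · filter_upwards [self_mem_nhdsWithin] with k hk
        have hk2 : k < 1 := hk.2
        exact mul_pos (by linarith) hω
    have t2 : Tendsto (fun k : ℝ => ((1 - k) * ω)⁻¹) (𝓝[Set.Ioo (-1 : ℝ) 1] 1) atTop :=
      tendsto_inv_nhdsGT_zero.comp t1
    have t3 : Tendsto (fun k : ℝ => (k * b / lam + a) * ((1 - k) * ω)⁻¹)
        (𝓝[Set.Ioo (-1 : ℝ) 1] 1) atTop := by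
      apply Filter.Tendsto.pos_mul_atTop (C := b / lam + a) (by positivity) _ t2
      have : Tendsto (fun k : ℝ => k * b / lam + a) (𝓝 1) (𝓝 (1 * b / lam + a)) := by
        exact ((continuous_id.mul continuous_const).div_const _).add continuous_const |>.tendsto 1
      simpa using this.mono_left nhdsWithin_le_nhds
    have t4 : Tendsto g (𝓝[Set.Ioo (-1 : ℝ) 1] 1) atBot := by
      have heqg : g = fun k : ℝ => -((k * b / lam + a) * ((1 - k) * ω)⁻¹) := by
        funext k
        simp only [hgdef]
        rw [show (k - 1) * ω = -((1 - k) * ω) by ring, div_neg, div_eq_mul_inv]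
      rw [heqg]
      exact tendsto_neg_atTop_atBot.comp t3
    have t5 : Tendsto (fun k => Real.arctan (g k)) (𝓝[Set.Ioo (-1 : ℝ) 1] 1) (𝓝 (-(π/2))) :=
      (Real.tendsto_arctan_atBot.mono_right nhdsWithin_le_nhds).comp t4
    have t6 : Tendsto (fun k => π / 2 - Real.arctan (g k)) (𝓝[Set.Ioo (-1 : ℝ) 1] 1) (𝓝 π) := by
      have := tendsto_const_nhds (α := ℝ) (x := π / 2)
        (f := 𝓝[Set.Ioo (-1 : ℝ) 1] (1:ℝ)) |>.sub t5
      simpa using this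
    have htend : Tendsto θ₀ (𝓝[Set.Ioo (-1 : ℝ) 1] 1) (𝓝 π) := by
      apply t6.congr'
      filter_upwards [self_mem_nhdsWithin] with k hk
      exact (hrep k hk).symm
    have hev : ∀ᶠ k in 𝓝[Set.Ioo (-1 : ℝ) 1] 1, w < θ₀ k ∧ k ∈ Set.Ioo (-1 : ℝ) 1 :=
      (htend.eventually_const_lt hw).and self_mem_nhdsWithin
    obtain ⟨k, hk1, hk2⟩ := hev.exists
    exact ⟨k, hk2, hk1⟩
  have hIooNe : (Set.Ioo (-1 : ℝ) 1).Nonempty := ⟨0, by norm_num⟩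
  have hlub : IsLUB (θ₀ '' Set.Ioo (-1 : ℝ) 1) π := by
    constructor
    · rintro _ ⟨k, hk, rfl⟩
      exact (hlt k hk).le
    · intro u hu
      by_contra h
      push_neg at h
      obtain ⟨k, hk, hwk⟩ := key u h
      exact absurd (hu ⟨k, hk, rfl⟩) (not_le.mpr hwk)
  have hsup1 : sSup (θ₀ '' Set.Ioo (-1 : ℝ) 1) = π :=
    hlub.csSup_eq (hIooNe.image θ₀)
  -- the sInf computation
  have hInf : ∀ k ∈ Set.Ioo (-1 : ℝ) 1,
      sInf {L : ℝ | 0 < L ∧ Fchar lam a b k L 0 = 0} = θ₀ k / ω := by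
    intro k hk
    obtain ⟨⟨h0, hπ⟩, heq⟩ := hθ k hk
    have hcne : (k - 1) * ω < 0 := mul_neg_of_neg_of_pos (by linarith [hk.2]) hω
    have hSdesc : {L : ℝ | 0 < L ∧ Fchar lam a b k L 0 = 0}
        = {L : ℝ | 0 < L ∧ (k - 1) * ω * Real.cos (ω * L) = (k * b / lam + a) * Real.sin (ω * L)} := by
      have hre : ∀ L : ℝ, (k - 1) * Real.cos (ω * L) - (k * b / lam + a) * (Real.sin (ω * L) / ω)
          = ((k - 1) * ω * Real.cos (ω * L) - (k * b / lam + a) * Real.sin (ω * L)) / ω := by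
        intro L
        field_simp
      ext L
      simp only [Set.mem_setOf_eq, Fchar_zero lam a b hlam ha hb, Complex.ofReal_eq_zero, ← hωdef]
      rw [hre L, div_eq_zero_iff, or_iff_left hω.ne', sub_eq_zero]
    rw [hSdesc]
    apply IsLeast.csInf_eq
    constructor
    · refine ⟨div_pos h0 hω, ?_⟩
      rw [mul_div_cancel₀ _ hω.ne']
      exact heq
    · rintro L ⟨hL, hF⟩
      set θ := ω * L with hθdef
      have hθpos : 0 < θ := mul_pos hω hL
      have hsin0 : Real.sin (θ - θ₀ k) = 0 := by
        have hc : (k - 1) * ω ≠ 0 := hcne.ne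
        have hexp : (k - 1) * ω * Real.sin (θ - θ₀ k) = 0 := by
          rw [Real.sin_sub]
          linear_combination Real.sin θ * heq - Real.sin (θ₀ k) * hF
        exact (mul_eq_zero.mp hexp).resolve_left hc
      obtain ⟨n, hn⟩ := Real.sin_eq_zero_iff.mp hsin0
      have hn0 : 0 ≤ n := by
        by_contra hneg
        push_neg at hneg
        have hn1' : n ≤ -1 := by omega
        have hn1 : (n : ℝ) ≤ -1 := by exact_mod_cast hn1'
        have : θ = θ₀ k + n * π := by linarith [hn]
        nlinarith [Real.pi_pos]
      have : θ₀ k ≤ θ := by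
        have : (0 : ℝ) ≤ n * π := mul_nonneg (by exact_mod_cast hn0) Real.pi_pos.le
        linarith [hn]
      rw [div_le_iff₀ hω]
      linarith [this]
  -- final sup
  have hωinv : Real.sqrt (lam / (a * b)) = ω⁻¹ := by
    rw [show lam / (a * b) = (a * b / lam)⁻¹ by field_simp, Real.sqrt_inv, hωdef]
  have hlub2 : IsLUB ((fun k => sInf {L : ℝ | 0 < L ∧ Fchar lam a b k L 0 = 0}) ''
      Set.Ioo (-1 : ℝ) 1) (π / ω) := by
    constructor
    · rintro _ ⟨k, hk, rfl⟩
      show sInf {L : ℝ | 0 < L ∧ Fchar lam a b k L 0 = 0} ≤ π / ω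
      rw [hInf k hk]
      gcongr
      exact (hlt k hk).le
    · intro u hu
      by_contra h
      push_neg at h
      have huω : u * ω < π := by
        rw [lt_div_iff₀ hω] at h
        exact h
      obtain ⟨k, hk, hwk⟩ := key (u * ω) huω
      have : u < θ₀ k / ω := by
        rw [lt_div_iff₀ hω]
        exact hwk
      have h2 : sInf {L : ℝ | 0 < L ∧ Fchar lam a b k L 0 = 0} ≤ u := hu ⟨k, hk, rfl⟩
      rw [hInf k hk] at h2
      linarith
  refine ⟨hmono, hlt, hsup1, ?_⟩
  rw [hlub2.csSup_eq (hIooNe.image _), hωinv]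
  rw [div_eq_mul_inv, mul_comm]
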